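/- Let $X$ be a compact metric space and $f:X\to X$ a continuous map. If there exists $p\in X$ with $X=\overline{\omega}(p,f)$, then the set $\overline{T}(f)=\{x\in X : X=\overline{\omega}(x,f)\}$ is residual in $X$ (contains a dense $G_\delta$ set). -/

import Mathlib

open Filter Metric Set
open scoped Classical Topology

noncomputable def upperDensity (A : Set ℕ) : ℝ :=
  Filter.limsup
    (fun n : ℕ => (((Finset.range n).filter (fun i => i ∈ A)).card : ℝ) / n) Filter.atTop

def HasDensityOne (A : Set ℕ) : Prop :=
  Filter.Tendsto
    (fun n : ℕ => (((Finset.range n).filter (fun i => i ∈ A)).card : ℝ) / n) Filter.atTop (nhds 1)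

def omegaBarSeq {X : Type*} [MetricSpace X] (x : ℕ → X) : Set X :=
  {y | ∀ ε > 0, 0 < upperDensity {i | dist (x i) y < ε}}

def omegaBar {X : Type*} [MetricSpace X] (f : X → X) (x : X) : Set X :=
  omegaBarSeq (fun i => f^[i] x)

/-! ### Auxiliary lemmas -/

noncomputable def cnt (P : ℕ → Prop) (n : ℕ) : ℝ :=
  (((Finset.range n).filter P).card : ℝ) / n

lemma upperDensity_eq_limsup_cnt (A : Set ℕ) :
    upperDensity A = Filter.limsup (cnt (fun i => i ∈ A)) Filter.atTop := rfl

lemma cnt_nonneg (P : ℕ → Prop) (n : ℕ) : 0 ≤ cnt P n := by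
  unfold cnt; positivity

lemma cnt_le_one (P : ℕ → Prop) (n : ℕ) : cnt P n ≤ 1 := by
  unfold cnt
  apply div_le_one_of_le₀ _ n.cast_nonneg
  exact_mod_cast (Finset.card_filter_le _ _).trans (by simp)

lemma cnt_mono {P Q : ℕ → Prop} (h : ∀ i, P i → Q i) (n : ℕ) : cnt P n ≤ cnt Q n := by
  unfold cnt
  rw [div_eq_mul_inv, div_eq_mul_inv]
  apply mul_le_mul_of_nonneg_right _ (by positivity)
  have hsub : (Finset.range n).filter P ⊆ (Finset.range n).filter Q := by
    intro i hi
    simp only [Finset.mem_filter] at hi ⊢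
    exact ⟨hi.1, h i hi.2⟩
  exact_mod_cast Finset.card_le_card hsub

lemma cnt_isBoundedUnder (P : ℕ → Prop) :
    Filter.IsBoundedUnder (· ≤ ·) Filter.atTop (cnt P) :=
  Filter.isBoundedUnder_of ⟨1, fun n => cnt_le_one P n⟩

lemma cnt_isCoboundedUnder (P : ℕ → Prop) :
    Filter.IsCoboundedUnder (· ≤ ·) Filter.atTop (cnt P) :=
  Filter.isCoboundedUnder_le_of_le Filter.atTop (fun n => cnt_nonneg P n)

lemma limsup_cnt_mono {P Q : ℕ → Prop} (h : ∀ i, P i → Q i) :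
    Filter.limsup (cnt P) Filter.atTop ≤ Filter.limsup (cnt Q) Filter.atTop :=
  Filter.limsup_le_limsup (Filter.Eventually.of_forall (cnt_mono h))
    (cnt_isCoboundedUnder P) (cnt_isBoundedUnder Q)

lemma upperDensity_mono {A B : Set ℕ} (h : A ⊆ B) : upperDensity A ≤ upperDensity B := by
  rw [upperDensity_eq_limsup_cnt, upperDensity_eq_limsup_cnt]
  exact limsup_cnt_mono (fun i hi => h hi)

lemma exists_mem_of_upperDensity_pos {A : Set ℕ} (h : 0 < upperDensity A) : ∃ i, i ∈ A := by
  by_contra hA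
  push_neg at hA
  have hz : upperDensity A = 0 := by
    rw [upperDensity_eq_limsup_cnt]
    have : cnt (fun i => i ∈ A) = fun _ => (0 : ℝ) := by
      funext n
      unfold cnt
      have : (Finset.range n).filter (fun i => i ∈ A) = ∅ :=
        Finset.filter_false_of_mem (fun i _ => hA i)
      rw [this]; simp
    rw [this, Filter.limsup_const]
  rw [hz] at h; exact lt_irrefl _ h

lemma le_limsup_cnt {P : ℕ → Prop} {c : ℝ}
    (h : ∀ ε > (0:ℝ), ∃ᶠ n in Filter.atTop, c - ε < cnt P n) :
    c ≤ Filter.limsup (cnt P) Filter.atTop := by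
  apply le_of_forall_sub_le
  intro ε hε
  exact Filter.le_limsup_of_frequently_le ((h ε hε).mono (fun n hn => hn.le))
    (cnt_isBoundedUnder P)

/-- Counting shift inequality. -/
lemma cnt_shift (P : ℕ → Prop) (s n : ℕ) :
    cnt P n - (s : ℝ) / n ≤ cnt (fun i => P (i + s)) n := by
  have key : ((Finset.range n).filter P).card ≤
      ((Finset.range n).filter (fun i => P (i + s))).card + s := by
    set S := (Finset.range n).filter P with hS
    set T := (Finset.range n).filter (fun i => P (i + s)) with hT
    have h1 : (S.filter (fun j => s ≤ j)).card ≤ T.card := by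
      apply Finset.card_le_card_of_injOn (fun j => j - s)
      · intro j hj
        simp only [Finset.mem_coe, Finset.mem_filter, Finset.mem_range, hS] at hj
        obtain ⟨⟨hjn, hjP⟩, hsj⟩ := hj
        simp only [Finset.mem_coe, Finset.mem_filter, Finset.mem_range, hT]
        constructor
        · omega
        · rwa [Nat.sub_add_cancel hsj]
      · intro a ha b hb hab
        simp only [Finset.mem_coe, Finset.mem_filter] at ha hb
        dsimp only at hab
        omega
    have h2 : (S.filter (fun j => ¬ s ≤ j)).card ≤ s := by
      apply le_trans (Finset.card_le_card (t := Finset.range s) ?_) (by simp)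
      intro j hj
      simp only [Finset.mem_filter] at hj
      simp only [Finset.mem_range]
      omega
    have h3 := Finset.card_filter_add_card_filter_not (s := S) (p := fun j => s ≤ j)
    omega
  unfold cnt
  rw [sub_le_iff_le_add, ← add_div, div_eq_mul_inv, div_eq_mul_inv]
  apply mul_le_mul_of_nonneg_right _ (by positivity)
  exact_mod_cast key

/-- The count function is lower semicontinuous, so sublevel complements are open. -/
lemma isOpen_cnt_gt {X : Type*} [MetricSpace X] {f : X → X} (hf : Continuous f)
    (n : ℕ) (y : X) (r c : ℝ) :
    IsOpen {x : X | c < cnt (fun i => dist (f^[i] x) y < r) n} := by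
  rw [isOpen_iff_mem_nhds]
  intro x hx
  set S := (Finset.range n).filter (fun i => dist (f^[i] x) y < r) with hS
  set V := ⋂ i ∈ S, {z : X | dist (f^[i] z) y < r} with hV
  have hVopen : IsOpen V := by
    apply isOpen_biInter_finset
    intro i _
    exact isOpen_lt ((hf.iterate i).dist continuous_const) continuous_const
  have hxV : x ∈ V := by
    rw [hV]
    simp only [Set.mem_iInter]
    intro i hi
    simp only [hS, Finset.mem_filter] at hi
    exact hi.2
  have hsub : V ⊆ {x : X | c < cnt (fun i => dist (f^[i] x) y < r) n} := by
    intro z hz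
    simp only [Set.mem_setOf_eq]
    refine lt_of_lt_of_le hx ?_
    unfold cnt
    rw [div_eq_mul_inv, div_eq_mul_inv]
    apply mul_le_mul_of_nonneg_right _ (by positivity)
    have hsub2 : S ⊆ (Finset.range n).filter (fun i => dist (f^[i] z) y < r) := by
      intro i hi
      have hi' := hi
      simp only [hS, Finset.mem_filter] at hi'
      exact Finset.mem_filter.2 ⟨hi'.1, Set.mem_iInter₂.1 hz i hi⟩
    exact_mod_cast Finset.card_le_card hsub2
  exact Filter.mem_of_superset (hVopen.mem_nhds hxV) hsub

theorem stmt10 {X : Type*} [MetricSpace X] [CompactSpace X] (f : X → X) (hf : Continuous f)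
    (p : X) (hp : omegaBar f p = Set.univ) :
    ∃ G : Set X, IsGδ G ∧ Dense G ∧ G ⊆ {x : X | omegaBar f x = Set.univ} := by
  -- density of visits of p near its orbit points
  set δ : ℕ → ℕ → ℝ := fun k m =>
    upperDensity {i | dist (f^[i] p) (f^[k] p) < 1 / (m + 1)} with hδ
  have hδpos : ∀ k m, 0 < δ k m := by
    intro k m
    have hk : (f^[k] p) ∈ omegaBar f p := by rw [hp]; trivial
    exact hk (1 / (m + 1)) (by positivity)
  -- the candidate Gδ set
  set G : Set X := ⋂ (k : ℕ), ⋂ (m : ℕ), ⋂ (j : ℕ), ⋂ (N : ℕ),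
    ⋃ (n : ℕ), ⋃ (_ : N ≤ n),
      {x : X | δ k m - 1 / (j + 1) <
        cnt (fun i => dist (f^[i] x) (f^[k] p) < 2 / (m + 1)) n} with hG
  refine ⟨G, ?_, ?_, ?_⟩
  · -- Gδ
    refine IsGδ.iInter fun k => IsGδ.iInter fun m => IsGδ.iInter fun j => IsGδ.iInter fun N => ?_
    exact IsOpen.isGδ (isOpen_iUnion fun n => isOpen_iUnion fun _ => isOpen_cnt_gt hf n _ _ _)
  · -- dense: the orbit of p lies in G and is dense
    have horbG : ∀ s : ℕ, f^[s] p ∈ G := by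
      intro s
      simp only [hG, Set.mem_iInter]
      intro k m j N
      simp only [Set.mem_iUnion, Set.mem_setOf_eq]
      set ε : ℝ := 1 / (j + 1) with hε
      have hεpos : 0 < ε := by positivity
      set P : ℕ → Prop := fun i => dist (f^[i] p) (f^[k] p) < 1 / (m + 1) with hP
      have hfreq : ∃ᶠ n in Filter.atTop, δ k m - ε / 2 < cnt P n := by
        apply Filter.frequently_lt_of_lt_limsup (cnt_isCoboundedUnder P)
        have : δ k m = Filter.limsup (cnt P) Filter.atTop := by
          rw [hδ]; rfl
        rw [← this]
        linarith [hδpos k m, hεpos]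
      have hev : ∀ᶠ n in Filter.atTop, N ≤ n ∧ (s : ℝ) / n < ε / 2 := by
        apply Filter.Eventually.and (Filter.eventually_ge_atTop N)
        exact (tendsto_const_div_atTop_nhds_zero_nat (s : ℝ)).eventually_lt_const
          (by positivity)
      obtain ⟨n, hn1, hn2, hn3⟩ := (hfreq.and_eventually hev).exists
      refine ⟨n, hn2, ?_⟩
      have step1 : cnt P n - (s : ℝ) / n ≤ cnt (fun i => P (i + s)) n := cnt_shift P s n
      have step2 : cnt (fun i => P (i + s)) n ≤
          cnt (fun i => dist (f^[i] (f^[s] p)) (f^[k] p) < 2 / (m + 1)) n := by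
        apply cnt_mono
        intro i hi
        rw [← Function.iterate_add_apply]
        refine lt_of_lt_of_le hi ?_
        rw [div_le_div_iff₀ (by positivity) (by positivity)]
        nlinarith [Nat.cast_nonneg (α := ℝ) m]
      have : δ k m - ε < cnt P n - (s : ℝ) / n := by linarith
      linarith
    have hdense : Dense {x : X | ∃ s : ℕ, f^[s] p = x} := by
      rw [Metric.dense_iff]
      intro x r hr
      have hx : x ∈ omegaBar f p := by rw [hp]; trivial
      obtain ⟨i, hi⟩ := exists_mem_of_upperDensity_pos (hx r hr)
      exact ⟨f^[i] p, Metric.mem_ball.2 hi, ⟨i, rfl⟩⟩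
    apply Dense.mono _ hdense
    rintro x ⟨s, rfl⟩
    exact horbG s
  · -- G consists of points with full omegaBar
    intro x hx
    simp only [Set.mem_setOf_eq]
    ext y
    simp only [Set.mem_univ, iff_true]
    intro ε hε
    -- choose an orbit point close to y and a small scale
    have hy : y ∈ omegaBar f p := by rw [hp]; trivial
    obtain ⟨k, hk⟩ := exists_mem_of_upperDensity_pos (hy (ε / 2) (by positivity))
    obtain ⟨m, hm⟩ := exists_nat_gt (4 / ε)
    have hmpos : (0:ℝ) < m + 1 := by positivity
    have hscale : 2 / ((m : ℝ) + 1) < ε / 2 := by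
      rw [div_lt_iff₀ hmpos]
      have h4 : 4 / ε < (m : ℝ) + 1 := lt_of_lt_of_le hm (by linarith)
      rw [div_lt_iff₀ hε] at h4
      nlinarith
    -- the visit density of x to the small ball around f^[k] p is at least δ k m
    have hxkm : δ k m ≤
        Filter.limsup (cnt (fun i => dist (f^[i] x) (f^[k] p) < 2 / (m + 1))) Filter.atTop := by
      apply le_limsup_cnt
      intro ε' hε'
      obtain ⟨j, hj⟩ := exists_nat_gt (1 / ε')
      have hj' : 1 / ((j:ℝ) + 1) < ε' := by
        rw [div_lt_iff₀ (by positivity)]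
        have : 1 / ε' < (j : ℝ) + 1 := lt_of_lt_of_le hj (by linarith)
        rw [div_lt_iff₀ hε'] at this
        linarith
      rw [Filter.frequently_atTop]
      intro N
      have := hx
      simp only [hG, Set.mem_iInter] at this
      have h := this k m j N
      simp only [Set.mem_iUnion, Set.mem_setOf_eq] at h
      obtain ⟨n, hn, hcnt⟩ := h
      exact ⟨n, hn, by linarith⟩
    have hsub : {i | dist (f^[i] x) (f^[k] p) < 2 / (m + 1)} ⊆
        {i | dist (f^[i] x) y < ε} := by
      intro i hi
      simp only [Set.mem_setOf_eq] at hi ⊢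
      calc dist (f^[i] x) y ≤ dist (f^[i] x) (f^[k] p) + dist (f^[k] p) y := dist_triangle _ _ _
        _ < 2 / (m + 1) + ε / 2 := by
            exact add_lt_add hi hk
        _ < ε := by linarith
    calc (0:ℝ) < δ k m := hδpos k m
      _ ≤ _ := hxkm
      _ ≤ upperDensity {i | dist (f^[i] x) y < ε} := by
          rw [upperDensity_eq_limsup_cnt]
          exact limsup_cnt_mono (fun i hi => hsub hi)
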